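/- In the multiple-maintenance-state construction, define τ₁^{(N)} = Σ_{0≤n≤M} Σ_{0≤j≤M} Σ_{0≤i≤N−1} |A^N(μ_j|μ_n)·Q^{μ_j}(i|N)|·g(N,μ_n) and τ₂^{(N)} = Σ_{0≤n≤M} Σ_{0≤j≤M} Σ_{0≤i≤N−1} |A^i(μ_j|μ_n)·Q^{μ_j}(N|i)|·g(i,μ_n). Then V_r^{(N)} − V_c^{(N)} = τ₂^{(N)} − τ₁^{(N)}, where V_r^{(N)} = Σ_{μ∈Z} R_ε(c_N|(N,μ))·g(N,μ) and V_c^{(N)} = ε·Σ_{μ∈Z} R_ε((N,μ)|c_N). In particular max[R_ε(c_N|c_{N−1}), R_ε(c_{N−1}|c_N)] = |τ₁^{(N)} − τ₂^{(N)}|/ε. -/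

import Mathlib

noncomputable section

/-- `μ_j = 1/2 + j/M`. -/
def μval (M j : ℕ) : ℝ := 1 / 2 + (j : ℝ) / (M : ℝ)

/-- The queueing generator `Q^μ` on `X = {0,…,N}`: `Q^μ(i+1|i) = 1`, `Q^μ(i−1|i) = μ`,
diagonal `−1` at `0`, `−μ` at `N`, `−(1+μ)` in between, other entries `0`;
`Qq N μ i' i = Q^μ(i'|i)`. -/
def Qq (N : ℕ) (μ : ℝ) (i' i : Fin (N + 1)) : ℝ :=
  if i'.val = i.val + 1 then 1
  else if i'.val + 1 = i.val then μ
  else if i' = i then -((if i.val < N then (1 : ℝ) else 0) + (if 0 < i.val then μ else 0))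
  else 0

/-- The upward jump rate of the environment chain `A^i`: `i` for `i ≥ 1`, `1/M²` for `i = 0`. -/
def upRate (M i : ℕ) : ℝ := if i = 0 then ((M : ℝ) ^ 2)⁻¹ else (i : ℝ)

/-- The environment generator `A^i` on `Z = {μ_0,…,μ_M}` (indexed by `j`):
`A^i(μ_{j+1}|μ_j) = upRate M i`, `A^i(μ_{j−1}|μ_j) = 1`, diagonal making row sums zero,
other entries `0`; `Aq M i j' j = A^i(μ_{j'}|μ_j)`. -/
def Aq (M i : ℕ) (j' j : Fin (M + 1)) : ℝ :=
  if j'.val = j.val + 1 then upRate M i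
  else if j'.val + 1 = j.val then 1
  else if j' = j then -((if j.val < M then upRate M i else 0) + (if 0 < j.val then (1 : ℝ) else 0))
  else 0

/-- `η(μ) = Σ_{i=0}^{N} μ^{−i}`. -/
def ηq (N : ℕ) (μ : ℝ) : ℝ := ∑ k ∈ Finset.range (N + 1), μ⁻¹ ^ k

/-- `m^μ(i) = μ^{−i}/η(μ)`. -/
def mq (N : ℕ) (μ : ℝ) (i : Fin (N + 1)) : ℝ := μ⁻¹ ^ i.val / ηq N μ

/-- `σ(i) = Σ_{j=0}^{M} i^j` for `i ≥ 1`, and `σ(0) = Σ_{j=0}^{M} M^{−2j}`. -/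
def σq (M i : ℕ) : ℝ := ∑ j ∈ Finset.range (M + 1), upRate M i ^ j

/-- `ν^i(μ_j) = i^j/σ(i)` for `i ≥ 1`, and `ν^0(μ_j) = M^{−2j}/σ(0)`. -/
def νq (M i : ℕ) (j : Fin (M + 1)) : ℝ := upRate M i ^ j.val / σq M i

/-- The product measure `g(i,μ_j) = m^{μ_j}(i)·ν^i(μ_j)` on the natural space. -/
def gq (N M : ℕ) (p : Fin (N + 1) × Fin (M + 1)) : ℝ :=
  mq N (μval M p.2.val) p.1 * νq M p.1.val p.2

/-- The minimal choice `τ_ε(i,μ)`: the maximum of the two ratios in (12). -/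
def τq (N M : ℕ) (p : Fin (N + 1) × Fin (M + 1)) : ℝ :=
  max
    ((∑ s ∈ Finset.univ.erase p,
        |Aq M s.1.val p.2 s.2 * Qq N (μval M p.2.val) p.1 s.1| * gq N M s) /
      (Aq M p.1.val p.2 p.2 * Qq N (μval M p.2.val) p.1 p.1 * gq N M p))
    ((∑ s ∈ Finset.univ.erase p,
        |Aq M p.1.val s.2 p.2 * Qq N (μval M s.2.val) s.1 p.1|) /
      (Aq M p.1.val p.2 p.2 * Qq N (μval M p.2.val) p.1 p.1))

/-- The natural-space part of the combined generator:
`R_ε(i',μ'|i,μ) = |A^i(μ'|μ)·Q^{μ'}(i'|i)|` off the diagonal and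
`R_ε(i,μ|i,μ) = −τ_ε(i,μ)·|A^i(μ|μ)·Q^μ(i|i)|`; `Rnat N M s p = R_ε(s|p)`. -/
def Rnat (N M : ℕ) (s p : Fin (N + 1) × Fin (M + 1)) : ℝ :=
  if s = p then -τq N M p * |Aq M p.1.val p.2 p.2 * Qq N (μval M p.2.val) p.1 p.1|
  else |Aq M p.1.val s.2 p.2 * Qq N (μval M s.2.val) s.1 p.1|

/-- Rate into the maintenance state: `R_ε(c_i|(i,μ)) = −Σ_{(i',μ')} R_ε(i',μ'|(i,μ))`. -/
def RcIn (N M : ℕ) (p : Fin (N + 1) × Fin (M + 1)) : ℝ :=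
  -∑ s : Fin (N + 1) × Fin (M + 1), Rnat N M s p

/-- Rate out of the maintenance state:
`R_ε((i,μ)|c_i) = −(1/ε)·Σ_{(i',μ')} R_ε((i,μ)|(i',μ'))·g(i',μ')`. -/
def RcOut (N M : ℕ) (ε : ℝ) (p : Fin (N + 1) × Fin (M + 1)) : ℝ :=
  -(1 / ε) * ∑ s : Fin (N + 1) × Fin (M + 1), Rnat N M p s * gq N M s

/-- The recursively defined pair `(V_r^{(j)}, V_c^{(j)})` with `j = N − t` (fuel `t`). -/
def Vrc (N M : ℕ) (ε : ℝ) : ℕ → ℝ × ℝ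
  | 0 =>
      (∑ μ : Fin (M + 1),
          RcIn N M (⟨N, Nat.lt_succ_self N⟩, μ) * gq N M (⟨N, Nat.lt_succ_self N⟩, μ),
        ε * ∑ μ : Fin (M + 1), RcOut N M ε (⟨N, Nat.lt_succ_self N⟩, μ))
  | t + 1 =>
      let v := Vrc N M ε t
      let j : Fin (N + 1) := ⟨N - (t + 1), by omega⟩
      ((∑ μ : Fin (M + 1), RcIn N M (j, μ) * gq N M (j, μ)) + max (v.1 - v.2) 0,
        ε * (∑ μ : Fin (M + 1), RcOut N M ε (j, μ)) + max (v.2 - v.1) 0)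

/-- `(V_r^{(j)}, V_c^{(j)})` for `1 ≤ j ≤ N`. -/
def Vj (N M : ℕ) (ε : ℝ) (j : ℕ) : ℝ × ℝ := Vrc N M ε (N - j)

/-- The combined generator `R_ε` of the multiple-maintenance-state construction on
`Ŷ = (X×Z) ⊕ {c_0,…,c_N}`; `Rhat N M ε s p = R_ε(s|p)`. -/
def Rhat (N M : ℕ) (ε : ℝ) :
    ((Fin (N + 1) × Fin (M + 1)) ⊕ Fin (N + 1)) →
      ((Fin (N + 1) × Fin (M + 1)) ⊕ Fin (N + 1)) → ℝ
  | Sum.inl s, Sum.inl p => Rnat N M s p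
  | Sum.inr a, Sum.inl p => if a = p.1 then RcIn N M p else 0
  | Sum.inl s, Sum.inr a => if a = s.1 then RcOut N M ε s else 0
  | Sum.inr a, Sum.inr b =>
      if a = b then
        if b.val = 0 then
          -((∑ μ : Fin (M + 1), RcOut N M ε (b, μ)) +
              max ((Vj N M ε 1).2 - (Vj N M ε 1).1) 0 / ε)
        else -(max (Vj N M ε b.val).1 (Vj N M ε b.val).2) / ε
      else if a.val = b.val + 1 then
        max ((Vj N M ε (b.val + 1)).2 - (Vj N M ε (b.val + 1)).1) 0 / ε
      else if a.val + 1 = b.val then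
        max ((Vj N M ε b.val).1 - (Vj N M ε b.val).2) 0 / ε
      else 0

/-- The target stationary measure on `Ŷ`: `g` on the natural space, `ε` on each `c_i`. -/
def ghat (N M : ℕ) (ε : ℝ) : ((Fin (N + 1) × Fin (M + 1)) ⊕ Fin (N + 1)) → ℝ :=
  Sum.elim (gq N M) fun _ => ε



lemma sum_split_aux (N M : ℕ) (F : Fin (N + 1) × Fin (M + 1) → ℝ) :
    ∑ s : Fin (N + 1) × Fin (M + 1), F s =
      (∑ i ∈ Finset.univ.filter (fun i : Fin (N + 1) => i.val < N),
        ∑ m : Fin (M + 1), F (i, m)) +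
      ∑ m : Fin (M + 1), F (⟨N, Nat.lt_succ_self N⟩, m) := by
  rw [Fintype.sum_prod_type]
  rw [← Finset.sum_filter_add_sum_filter_not Finset.univ (fun i : Fin (N + 1) => i.val < N)]
  congr 1
  have h : Finset.univ.filter (fun i : Fin (N + 1) => ¬ i.val < N)
      = {(⟨N, Nat.lt_succ_self N⟩ : Fin (N + 1))} := by
    ext i
    simp only [Finset.mem_filter, Finset.mem_univ, true_and, Finset.mem_singleton, Fin.ext_iff]
    have := i.isLt
    omega
  rw [h, Finset.sum_singleton]

/- STATEMENT 19: with τ₁^{(N)} and τ₂^{(N)} the triple sums of the proof of Theorem 4.1,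
V_r^{(N)} − V_c^{(N)} = τ₂^{(N)} − τ₁^{(N)}, and consequently
max[R_ε(c_N|c_{N−1}), R_ε(c_{N−1}|c_N)] = |τ₁^{(N)} − τ₂^{(N)}|/ε. -/
theorem stmt19 (N M : ℕ) (hN : 2 ≤ N) (hM : 1 ≤ M) (ε : ℝ) (hε : 0 < ε) :
    let cN : Fin (N + 1) := ⟨N, by omega⟩
    let τ₁ : ℝ := ∑ n : Fin (M + 1), ∑ j : Fin (M + 1),
      ∑ i ∈ Finset.univ.filter (fun i : Fin (N + 1) => i.val < N),
        |Aq M N j n * Qq N (μval M j.val) i cN| * gq N M (cN, n)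
    let τ₂ : ℝ := ∑ n : Fin (M + 1), ∑ j : Fin (M + 1),
      ∑ i ∈ Finset.univ.filter (fun i : Fin (N + 1) => i.val < N),
        |Aq M i.val j n * Qq N (μval M j.val) cN i| * gq N M (i, n)
    ((Vj N M ε N).1 - (Vj N M ε N).2 = τ₂ - τ₁) ∧
    max (Rhat N M ε (Sum.inr cN) (Sum.inr ⟨N - 1, by omega⟩))
        (Rhat N M ε (Sum.inr ⟨N - 1, by omega⟩) (Sum.inr cN)) = |τ₁ - τ₂| / ε := by
  intro cN τ₁ τ₂
  have hεne : ε ≠ 0 := ne_of_gt hε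
  set Atot := ∑ n : Fin (M + 1), ∑ s : Fin (N + 1) × Fin (M + 1),
      Rnat N M (cN, n) s * gq N M s with hAtot
  set Btot := ∑ n : Fin (M + 1), ∑ s : Fin (N + 1) × Fin (M + 1),
      Rnat N M s (cN, n) * gq N M (cN, n) with hBtot
  set C := ∑ n : Fin (M + 1), ∑ m : Fin (M + 1),
      Rnat N M (cN, n) (cN, m) * gq N M (cN, m) with hC
  have hV : Vj N M ε N = Vrc N M ε 0 := by rw [Vj, Nat.sub_self]
  have hVr : (Vj N M ε N).1 = -Btot := by
    rw [hV]
    show (∑ n : Fin (M + 1), RcIn N M (cN, n) * gq N M (cN, n)) = -Btot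
    simp only [RcIn, neg_mul, Finset.sum_neg_distrib, hBtot, Finset.sum_mul]
  have hVc : (Vj N M ε N).2 = -Atot := by
    rw [hV]
    show ε * (∑ n : Fin (M + 1), RcOut N M ε (cN, n)) = -Atot
    simp only [RcOut]
    rw [← Finset.mul_sum, ← hAtot]
    field_simp
  have hneA : ∀ (n m : Fin (M + 1)) (i : Fin (N + 1)), i.val < N →
      ((i, m) : Fin (N + 1) × Fin (M + 1)) ≠ (cN, n) := by
    intro n m i hi h
    have h1 : i = cN := congrArg Prod.fst h
    have h2 : i.val = N := by rw [h1]
    omega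
  have hA : Atot = τ₂ + C := by
    rw [hAtot]
    have : ∀ n : Fin (M + 1),
        (∑ s : Fin (N + 1) × Fin (M + 1), Rnat N M (cN, n) s * gq N M s) =
        (∑ i ∈ Finset.univ.filter (fun i : Fin (N + 1) => i.val < N),
          ∑ m : Fin (M + 1), Rnat N M (cN, n) (i, m) * gq N M (i, m)) +
        ∑ m : Fin (M + 1), Rnat N M (cN, n) (cN, m) * gq N M (cN, m) := by
      intro n
      exact sum_split_aux N M (fun s => Rnat N M (cN, n) s * gq N M s)
    rw [Finset.sum_congr rfl fun n _ => this n, Finset.sum_add_distrib, ← hC]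
    congr 1
    have hτ : τ₂ = ∑ n : Fin (M + 1),
        ∑ i ∈ Finset.univ.filter (fun i : Fin (N + 1) => i.val < N),
        ∑ m : Fin (M + 1),
          |Aq M i.val n m * Qq N (μval M n.val) cN i| * gq N M (i, m) := by
      rw [show τ₂ = ∑ n : Fin (M + 1), ∑ j : Fin (M + 1),
          ∑ i ∈ Finset.univ.filter (fun i : Fin (N + 1) => i.val < N),
          |Aq M i.val j n * Qq N (μval M j.val) cN i| * gq N M (i, n) from rfl]
      rw [Finset.sum_comm]
      exact Finset.sum_congr rfl fun n _ => Finset.sum_comm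
    rw [hτ]
    refine Finset.sum_congr rfl fun n _ => Finset.sum_congr rfl fun i hi =>
      Finset.sum_congr rfl fun m _ => ?_
    have hi' : i.val < N := (Finset.mem_filter.mp hi).2
    rw [Rnat, if_neg (fun h => hneA n m i hi' h.symm)]
  have hB : Btot = τ₁ + C := by
    rw [hBtot]
    have : ∀ n : Fin (M + 1),
        (∑ s : Fin (N + 1) × Fin (M + 1), Rnat N M s (cN, n) * gq N M (cN, n)) =
        (∑ i ∈ Finset.univ.filter (fun i : Fin (N + 1) => i.val < N),
          ∑ m : Fin (M + 1), Rnat N M (i, m) (cN, n) * gq N M (cN, n)) +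
        ∑ m : Fin (M + 1), Rnat N M (cN, m) (cN, n) * gq N M (cN, n) := by
      intro n
      exact sum_split_aux N M (fun s => Rnat N M s (cN, n) * gq N M (cN, n))
    rw [Finset.sum_congr rfl fun n _ => this n, Finset.sum_add_distrib]
    congr 1
    · have hτ : τ₁ = ∑ n : Fin (M + 1),
          ∑ i ∈ Finset.univ.filter (fun i : Fin (N + 1) => i.val < N),
          ∑ m : Fin (M + 1),
            |Aq M N m n * Qq N (μval M m.val) i cN| * gq N M (cN, n) := by
        exact Finset.sum_congr rfl fun n _ => Finset.sum_comm
      rw [hτ]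
      refine Finset.sum_congr rfl fun n _ => Finset.sum_congr rfl fun i hi =>
        Finset.sum_congr rfl fun m _ => ?_
      have hi' : i.val < N := (Finset.mem_filter.mp hi).2
      rw [Rnat, if_neg (hneA n m i hi')]
    · rw [hC, Finset.sum_comm]
  have key : (Vj N M ε N).1 - (Vj N M ε N).2 = τ₂ - τ₁ := by
    rw [hVr, hVc, hA, hB]; ring
  refine ⟨key, ?_⟩
  have hne1 : cN ≠ (⟨N - 1, by omega⟩ : Fin (N + 1)) := by
    intro h
    have := congrArg Fin.val h
    simp only [cN] at this
    omega
  have hval1 : (cN : Fin (N + 1)).val = (⟨N - 1, by omega⟩ : Fin (N + 1)).val + 1 := by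
    simp only [cN]; omega
  have hval2 : ¬ ((⟨N - 1, by omega⟩ : Fin (N + 1)).val = (cN : Fin (N + 1)).val + 1) := by
    simp only [cN]; omega
  have hNN : N - 1 + 1 = N := by omega
  have e1 : Rhat N M ε (Sum.inr cN) (Sum.inr ⟨N - 1, by omega⟩) =
      max ((Vj N M ε N).2 - (Vj N M ε N).1) 0 / ε := by
    show (if cN = (⟨N - 1, by omega⟩ : Fin (N + 1)) then _ else
      if (cN : Fin (N + 1)).val = (⟨N - 1, by omega⟩ : Fin (N + 1)).val + 1 then
        max ((Vj N M ε ((⟨N - 1, by omega⟩ : Fin (N + 1)).val + 1)).2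
          - (Vj N M ε ((⟨N - 1, by omega⟩ : Fin (N + 1)).val + 1)).1) 0 / ε
      else _) = _
    rw [if_neg hne1, if_pos hval1]
    show max ((Vj N M ε (N - 1 + 1)).2 - (Vj N M ε (N - 1 + 1)).1) 0 / ε = _
    rw [hNN]
  have e2 : Rhat N M ε (Sum.inr ⟨N - 1, by omega⟩) (Sum.inr cN) =
      max ((Vj N M ε N).1 - (Vj N M ε N).2) 0 / ε := by
    show (if (⟨N - 1, by omega⟩ : Fin (N + 1)) = cN then _ else
      if ((⟨N - 1, by omega⟩ : Fin (N + 1)) : Fin (N + 1)).val = (cN : Fin (N + 1)).val + 1 then _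
      else if ((⟨N - 1, by omega⟩ : Fin (N + 1)) : Fin (N + 1)).val + 1
          = (cN : Fin (N + 1)).val then
        max ((Vj N M ε (cN : Fin (N + 1)).val).1 - (Vj N M ε (cN : Fin (N + 1)).val).2) 0 / ε
      else _) = _
    rw [if_neg (Ne.symm hne1), if_neg hval2, if_pos (by simp only [cN]; omega)]
  rw [e1, e2, key]
  have key2 : (Vj N M ε N).2 - (Vj N M ε N).1 = τ₁ - τ₂ := by linarith [key]
  rw [key2]
  rcases le_total τ₁ τ₂ with h | h
  · rw [abs_of_nonpos (by linarith : τ₁ - τ₂ ≤ 0),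
      max_eq_right (by linarith : τ₁ - τ₂ ≤ (0 : ℝ)),
      max_eq_left (by linarith : (0 : ℝ) ≤ τ₂ - τ₁), zero_div,
      max_eq_right (div_nonneg (by linarith) hε.le), neg_sub]
  · rw [abs_of_nonneg (by linarith : (0 : ℝ) ≤ τ₁ - τ₂),
      max_eq_left (by linarith : (0 : ℝ) ≤ τ₁ - τ₂),
      max_eq_right (by linarith : τ₂ - τ₁ ≤ (0 : ℝ)), zero_div,
      max_eq_left (div_nonneg (by linarith) hε.le)]

end
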